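/- Let d ≥ 2 and m ≥ 2d be integers, let n ≥ 1, and set k = d. Let X be a set with dn elements and let X = X₁ ∪ X₂ ∪ … ∪ X_m be an m-coloring of X satisfying condition (★): for every t ∈ {1, …, d−1} and every subset I ⊆ {1, …, m} with |I| = t, Σ_{i∈I} |X_i| ≤ tn. Then there exist two distinct color classes such that the (m−1)-coloring of X obtained by merging them into a single color class still satisfies condition (★); in particular, two color classes of smallest sizes can be merged into a single class of size at most n. -/

import Mathlib

lemma sum_range_two_mul_aux (d : ℕ) (f : ℕ → ℕ) :
    ∑ r ∈ Finset.range (2 * d), f r = ∑ r ∈ Finset.range d, (f (2 * r) + f (2 * r + 1)) := by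
  induction d with
  | zero => simp
  | succ d ih =>
      have h2 : 2 * (d + 1) = (2 * d + 1) + 1 := by ring
      rw [h2, Finset.sum_range_succ, Finset.sum_range_succ, ih, Finset.sum_range_succ]
      ring

theorem merging_colors_k_eq_d
    {α : Type*} [DecidableEq α] (d m n : ℕ)
    (hd : 2 ≤ d) (hm : 2 * d ≤ m) (hn : 1 ≤ n)
    (X : Finset α) (C : Fin m → Finset α)
    (hdisj : ∀ i j : Fin m, i ≠ j → Disjoint (C i) (C j))
    (hunion : Finset.univ.biUnion C = X)
    (hcard : X.card = d * n)
    (hstar : ∀ t : ℕ, 1 ≤ t → t ≤ d - 1 → ∀ I : Finset (Fin m), I.card = t →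
        ∑ i ∈ I, (C i).card ≤ t * n) :
    ∃ i j : Fin m, i ≠ j ∧
      -- `i` and `j` can be chosen as two color classes of smallest sizes
      (∀ l : Fin m, l ≠ i → l ≠ j → (C i).card ≤ (C l).card ∧ (C j).card ≤ (C l).card) ∧
      -- the merged class has size at most n
      (C i ∪ C j).card ≤ n ∧
      -- the (m-1)-coloring obtained by merging classes `i` and `j` (indexed by
      -- `Fin m` with the index `j` removed, where class `i` becomes `C i ∪ C j`)
      -- still satisfies condition (★)
      (∀ t : ℕ, 1 ≤ t → t ≤ d - 1 → ∀ I : Finset (Fin m), j ∉ I → I.card = t →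
        ∑ l ∈ I, (if l = i then (C i ∪ C j).card else (C l).card) ≤ t * n) := by
  have hm0 : 0 < m := by omega
  set c : Fin m → ℕ := fun l => (C l).card with hc
  -- total sum
  have htot : ∑ l : Fin m, c l = d * n := by
    rw [← hcard, ← hunion, Finset.card_biUnion]
    intro a _ b _ hab
    exact hdisj a b hab
  -- choose i : global min
  obtain ⟨i, -, hi⟩ := Finset.exists_min_image (Finset.univ : Finset (Fin m)) c
    ⟨⟨0, hm0⟩, Finset.mem_univ _⟩
  -- choose j : min over erase i
  have herase_ne : ((Finset.univ : Finset (Fin m)).erase i).Nonempty := by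
    rw [← Finset.card_pos, Finset.card_erase_of_mem (Finset.mem_univ i), Finset.card_univ,
      Fintype.card_fin]
    omega
  obtain ⟨j, hjmem, hj⟩ := Finset.exists_min_image _ c herase_ne
  have hne : i ≠ j := fun h => (Finset.mem_erase.mp hjmem).1 h.symm
  have hpair : ∀ a b : Fin m, a ≠ b → c i + c j ≤ c a + c b := by
    intro a b hab
    by_cases ha : a = i
    · subst ha
      have : b ∈ Finset.univ.erase a := Finset.mem_erase.mpr ⟨Ne.symm hab, Finset.mem_univ _⟩
      exact Nat.add_le_add (le_refl _) (hj b this)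
    · by_cases hb : b = i
      · subst hb
        have : a ∈ Finset.univ.erase b := Finset.mem_erase.mpr ⟨ha, Finset.mem_univ _⟩
        have := hj a this
        omega
      · have h1 : c i ≤ c a := hi a (Finset.mem_univ _)
        have h2 : c j ≤ c b :=
          hj b (Finset.mem_erase.mpr ⟨hb, Finset.mem_univ _⟩)
        exact Nat.add_le_add h1 h2
  -- the merged class is small
  have hmerge : c i + c j ≤ n := by
    by_contra h
    push_neg at h
    set g : ℕ → ℕ := fun r => if hr : r < m then c ⟨r, hr⟩ else 0 with hg
    have hgsum : ∑ r ∈ Finset.range m, g r = d * n := by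
      rw [← htot, ← Fin.sum_univ_eq_sum_range]
      apply Finset.sum_congr rfl
      intro l _
      simp [hg, l.isLt]
    have hsub : ∑ r ∈ Finset.range (2 * d), g r ≤ d * n := by
      rw [← hgsum]
      exact Finset.sum_le_sum_of_subset (Finset.range_subset_range.mpr hm)
    have hpairs : ∀ r ∈ Finset.range d, n + 1 ≤ g (2 * r) + g (2 * r + 1) := by
      intro r hr
      rw [Finset.mem_range] at hr
      have h1 : 2 * r < m := by omega
      have h2 : 2 * r + 1 < m := by omega
      have hab : (⟨2 * r, h1⟩ : Fin m) ≠ ⟨2 * r + 1, h2⟩ := by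
        simp [Fin.ext_iff]
      have := hpair _ _ hab
      simp only [hg, dif_pos h1, dif_pos h2]
      omega
    have hlower : d * (n + 1) ≤ ∑ r ∈ Finset.range (2 * d), g r := by
      rw [sum_range_two_mul_aux]
      calc d * (n + 1) = ∑ _r ∈ Finset.range d, (n + 1) := by
            rw [Finset.sum_const, Finset.card_range]; ring
        _ ≤ _ := Finset.sum_le_sum hpairs
    have : d * (n + 1) ≤ d * n := le_trans hlower hsub
    nlinarith
  have hcardU : (C i ∪ C j).card = c i + c j :=
    Finset.card_union_of_disjoint (hdisj i j hne)
  refine ⟨i, j, hne, ?_, ?_, ?_⟩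
  · intro l hli hlj
    exact ⟨hi l (Finset.mem_univ _),
      hj l (Finset.mem_erase.mpr ⟨hli, Finset.mem_univ _⟩)⟩
  · rw [hcardU]; exact hmerge
  · intro t ht1 htd I hjI hIcard
    by_cases hiI : i ∈ I
    · have hsplit : ∑ l ∈ I, (if l = i then (C i ∪ C j).card else (C l).card)
          = (∑ l ∈ I.erase i, c l) + (c i + c j) := by
        rw [← Finset.sum_erase_add I _ hiI, if_pos rfl, hcardU]
        congr 1
        apply Finset.sum_congr rfl
        intro l hl
        rw [if_neg (Finset.mem_erase.mp hl).1]
      rw [hsplit]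
      have hcerase : (I.erase i).card = t - 1 := by
        rw [Finset.card_erase_of_mem hiI, hIcard]
      have hrest : ∑ l ∈ I.erase i, c l ≤ (t - 1) * n := by
        rcases Nat.eq_or_lt_of_le ht1 with h1 | h2
        · have : (I.erase i).card = 0 := by omega
          rw [Finset.card_eq_zero] at this
          simp [this]
        · exact hstar (t - 1) (by omega) (by omega) _ hcerase
      have : (t - 1) * n + n = t * n := by
        have : t - 1 + 1 = t := by omega
        calc (t - 1) * n + n = (t - 1 + 1) * n := by ring
          _ = t * n := by rw [this]
      omega
    · have : ∑ l ∈ I, (if l = i then (C i ∪ C j).card else (C l).card)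
          = ∑ l ∈ I, c l := by
        apply Finset.sum_congr rfl
        intro l hl
        have hli : l ≠ i := fun h => hiI (h ▸ hl)
        rw [if_neg hli]
      rw [this]
      exact hstar t ht1 htd I hIcard
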